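/- A measurement scheme Q determines any pure state among all states if and only if every non-zero element X of the kernel of M_Q has at least two positive eigenvalues, i.e. λ₂(X) > 0, where λ₂(X) is the second largest eigenvalue of X. -/

import Mathlib

open Matrix ComplexOrder

noncomputable def frobNorm {n m : Type*} [Fintype n] [Fintype m] {𝕜 : Type*} [RCLike 𝕜]
    (X : Matrix n m 𝕜) : ℝ :=
  Real.sqrt (∑ i, ∑ j, ‖X i j‖ ^ 2)

def IsPOVM {d m : ℕ} (P : Fin m → Matrix (Fin d) (Fin d) ℂ) : Prop :=
  (∀ j, (P j).PosSemidef) ∧ (∑ j, P j) = 1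

def IsMeasScheme {d l m : ℕ} (Q : Fin l → Fin m → Matrix (Fin d) (Fin d) ℂ) : Prop :=
  ∀ i, IsPOVM (Q i)

noncomputable def measMap {d l m : ℕ} (Q : Fin l → Fin m → Matrix (Fin d) (Fin d) ℂ)
    (X : Matrix (Fin d) (Fin d) ℂ) : Matrix (Fin l) (Fin m) ℝ :=
  Matrix.of fun i j => (Matrix.trace (X * Q i j)).re

noncomputable def pureState {d : ℕ} (ψ : Fin d → ℂ) : Matrix (Fin d) (Fin d) ℂ :=
  Matrix.vecMulVec ψ (star ψ)

def IsState {d : ℕ} (ρ : Matrix (Fin d) (Fin d) ℂ) : Prop :=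
  ρ.PosSemidef ∧ ρ.trace = 1

def DeterminesPure {d l m : ℕ} (Q : Fin l → Fin m → Matrix (Fin d) (Fin d) ℂ) : Prop :=
  ∀ ψ : Fin d → ℂ, (∑ k, Complex.normSq (ψ k)) = 1 →
    ∀ ρ : Matrix (Fin d) (Fin d) ℂ, IsState ρ →
      measMap Q (pureState ψ) = measMap Q ρ → ρ = pureState ψ

noncomputable def posEigCount {d : ℕ} {X : Matrix (Fin d) (Fin d) ℂ} (hX : X.IsHermitian) : ℕ :=
  Nat.card {i : Fin d // 0 < hX.eigenvalues i}

def Kset (d : ℕ) : Set (Matrix (Fin d) (Fin d) ℂ) :=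
  {X | ∃ hX : X.IsHermitian, posEigCount hX ≤ 1 ∧ frobNorm X = 1}

noncomputable def opNormHerm {d l m : ℕ}
    (T : Matrix (Fin d) (Fin d) ℂ → Matrix (Fin l) (Fin m) ℝ) : ℝ :=
  sSup {r : ℝ | ∃ X : Matrix (Fin d) (Fin d) ℂ, X.IsHermitian ∧ frobNorm X = 1 ∧ r = frobNorm (T X)}

/- ### Auxiliary lemmas -/

lemma measMap_sub' {d l m : ℕ} (Q : Fin l → Fin m → Matrix (Fin d) (Fin d) ℂ) (A B) :
    measMap Q (A - B) = measMap Q A - measMap Q B := by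
  ext i j
  simp [measMap, sub_mul, Complex.sub_re]

lemma measMap_smul_real' {d l m : ℕ} (Q : Fin l → Fin m → Matrix (Fin d) (Fin d) ℂ) (r : ℝ) (A) :
    measMap Q ((r : ℂ) • A) = r • measMap Q A := by
  ext i j
  simp [measMap, smul_mul_assoc, Complex.real_smul]

lemma trace_eq_zero_of_measMap' {d l m : ℕ} (hl : 0 < l)
    (Q : Fin l → Fin m → Matrix (Fin d) (Fin d) ℂ) (hQ : IsMeasScheme Q)
    {X : Matrix (Fin d) (Fin d) ℂ} (hX : X.IsHermitian)
    (h : measMap Q X = 0) : X.trace = 0 := by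
  set i : Fin l := ⟨0, hl⟩
  have h1 : ∀ j, (Matrix.trace (X * Q i j)).re = 0 := by
    intro j
    have := Matrix.ext_iff.mpr h i j
    simpa [measMap] using this
  have hre : (X.trace).re = 0 := by
    have h2 : X.trace = ∑ j, Matrix.trace (X * Q i j) := by
      rw [← Matrix.trace_sum]
      congr 1
      rw [← Finset.mul_sum, (hQ i).2, Matrix.mul_one]
    rw [h2, Complex.re_sum]
    exact Finset.sum_eq_zero fun j _ => h1 j
  have him : (X.trace).im = 0 := by
    have h3 : (X.trace) = star (X.trace) := by
      conv_lhs => rw [← hX, Matrix.trace_conjTranspose]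
    have := congrArg Complex.im h3
    simp only [Complex.star_def, Complex.conj_im] at this
    linarith
  exact Complex.ext hre him

lemma pureState_conj' {d : ℕ} (U : Matrix (Fin d) (Fin d) ℂ) (i0 : Fin d) :
    pureState (fun k => U k i0) =
      U * Matrix.diagonal (fun i => if i = i0 then (1 : ℂ) else 0) * star U := by
  ext a b
  rw [Matrix.star_eq_conjTranspose, Matrix.mul_apply]
  rw [Finset.sum_eq_single i0]
  · simp [pureState, Matrix.vecMulVec_apply, Matrix.mul_diagonal, Matrix.conjTranspose_apply,
      Pi.star_apply]
  · intro k _ hk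
    simp [Matrix.mul_diagonal, hk]
  · simp

lemma trace_conj_diag' {d : ℕ} (U : Matrix (Fin d) (Fin d) ℂ) (hU : star U * U = 1)
    (e : Fin d → ℂ) : (U * Matrix.diagonal e * star U).trace = ∑ i, e i := by
  rw [Matrix.trace_mul_cycle, hU, Matrix.one_mul, Matrix.trace_diagonal]

lemma pureState_isHermitian' {d : ℕ} (ψ : Fin d → ℂ) : (pureState ψ).IsHermitian := by
  ext a b
  simp [pureState, Matrix.conjTranspose_apply, Matrix.vecMulVec_apply, mul_comm]

lemma pureState_mulVec' {d : ℕ} (ψ w : Fin d → ℂ) :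
    pureState ψ *ᵥ w = (star ψ ⬝ᵥ w) • ψ := by
  ext k
  simp only [pureState, Matrix.mulVec, dotProduct, Matrix.vecMulVec_apply, Pi.star_apply,
    Pi.smul_apply, smul_eq_mul, Finset.sum_mul, Finset.mul_sum]
  apply Finset.sum_congr rfl
  intro x _
  ring

lemma dot_eigenvectorBasis' {d : ℕ} {Y : Matrix (Fin d) (Fin d) ℂ} (hY : Y.IsHermitian)
    (a b : Fin d) :
    star ⇑(hY.eigenvectorBasis a) ⬝ᵥ ⇑(hY.eigenvectorBasis b) = if a = b then 1 else 0 := by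
  have := orthonormal_iff_ite.mp hY.eigenvectorBasis.orthonormal a b
  rw [EuclideanSpace.inner_eq_star_dotProduct] at this
  rw [dotProduct_comm]
  exact this

lemma quadform' {d : ℕ} {Y : Matrix (Fin d) (Fin d) ℂ} (hY : Y.IsHermitian) {i j : Fin d}
    (hij : i ≠ j) (c1 c2 : ℂ) :
    star (c1 • ⇑(hY.eigenvectorBasis i) + c2 • ⇑(hY.eigenvectorBasis j)) ⬝ᵥ
      (Y *ᵥ (c1 • ⇑(hY.eigenvectorBasis i) + c2 • ⇑(hY.eigenvectorBasis j))) =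
      ((Complex.normSq c1 * hY.eigenvalues i + Complex.normSq c2 * hY.eigenvalues j : ℝ) : ℂ) := by
  have hsm : ∀ (r : ℝ) (v : Fin d → ℂ), r • v = (r : ℂ) • v := by
    intro r v; ext k; simp [Complex.real_smul]
  rw [Matrix.mulVec_add, Matrix.mulVec_smul, Matrix.mulVec_smul,
    hY.mulVec_eigenvectorBasis, hY.mulVec_eigenvectorBasis, hsm, hsm]
  simp only [star_add, star_smul, add_dotProduct, smul_dotProduct,
    dotProduct_add, dotProduct_smul, dot_eigenvectorBasis', hij, hij.symm,
    if_true, if_false, if_neg, smul_eq_mul, RCLike.star_def]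
  push_cast
  rw [mul_one, mul_one, mul_zero, mul_zero, add_zero, zero_add]
  rw [mul_comm ((hY.eigenvalues i : ℂ)) _, mul_comm ((hY.eigenvalues j : ℂ)) _,
    ← mul_assoc, ← mul_assoc, Complex.mul_conj, Complex.mul_conj]

theorem stmt5 {d l m : ℕ} (hl : 0 < l)
    (Q : Fin l → Fin m → Matrix (Fin d) (Fin d) ℂ) (hQ : IsMeasScheme Q) :
    DeterminesPure Q ↔
      ∀ (X : Matrix (Fin d) (Fin d) ℂ) (hX : X.IsHermitian),
        measMap Q X = 0 → X ≠ 0 → 2 ≤ posEigCount hX := by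
  constructor
  · -- DeterminesPure → kernel condition
    intro hdet X hX hker hXne
    by_contra hlt
    push_neg at hlt
    set μ := hX.eigenvalues with hμdef
    set U : Matrix (Fin d) (Fin d) ℂ := (hX.eigenvectorUnitary : Matrix (Fin d) (Fin d) ℂ)
      with hUdef
    have hUmem : star U * U = 1 :=
      Matrix.mem_unitaryGroup_iff'.mp (hX.eigenvectorUnitary).2
    have hspec : X = U * Matrix.diagonal (RCLike.ofReal ∘ μ) * star U := hX.spectral_theorem
    have htr : X.trace = 0 := trace_eq_zero_of_measMap' hl Q hQ hX hker
    have h4 : X.trace = ((∑ i, μ i : ℝ) : ℂ) := by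
      conv_lhs => rw [hspec]
      rw [trace_conj_diag' U hUmem]
      push_cast
      rfl
    have hsum : ∑ i, μ i = 0 := by
      rw [htr] at h4
      exact_mod_cast h4.symm
    have hpos : ∃ i0, 0 < μ i0 := by
      by_contra hnp
      push_neg at hnp
      have hall := (Finset.sum_eq_zero_iff_of_nonpos (fun i _ => hnp i)).mp hsum
      apply hXne
      rw [hspec]
      have hz : (RCLike.ofReal ∘ μ : Fin d → ℂ) = 0 := by
        funext i
        simp [Function.comp_apply, hall i (Finset.mem_univ i)]
      rw [hz, show Matrix.diagonal (0 : Fin d → ℂ) = 0 from Matrix.diagonal_zero]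
      simp
    obtain ⟨i0, hi0⟩ := hpos
    have honly : ∀ i, i ≠ i0 → μ i ≤ 0 := by
      intro i hi
      by_contra hip
      push_neg at hip
      have h2 : 2 ≤ posEigCount hX := by
        rw [posEigCount, Nat.card_eq_fintype_card]
        exact Fintype.one_lt_card_iff.mpr ⟨⟨i, hip⟩, ⟨i0, hi0⟩, by simp [hi]⟩
      omega
    have hψunit : (∑ k, Complex.normSq (U k i0)) = 1 := by
      have h5 : (star U * U) i0 i0 = 1 := by rw [hUmem]; simp
      rw [Matrix.mul_apply] at h5
      have h6 : (∑ k, (Complex.normSq (U k i0) : ℂ)) = 1 := by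
        rw [← h5]
        apply Finset.sum_congr rfl
        intro k _
        rw [Matrix.star_eq_conjTranspose, Matrix.conjTranspose_apply, Complex.star_def,
          ← Complex.normSq_eq_conj_mul_self]
      exact_mod_cast h6
    set lam := μ i0 with hlamdef
    have hlamne : lam ≠ 0 := ne_of_gt hi0
    set ν : Fin d → ℂ := fun i => (if i = i0 then 1 else 0) - ((lam⁻¹ : ℝ) : ℂ) * ((μ i : ℝ) : ℂ)
      with hνdef
    set ρ : Matrix (Fin d) (Fin d) ℂ := pureState (fun k => U k i0) - ((lam⁻¹ : ℝ) : ℂ) • X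
      with hρdef
    have hρconj : ρ = U * Matrix.diagonal ν * star U := by
      rw [hρdef, pureState_conj' U i0]
      conv_lhs => rw [hspec]
      have hd : Matrix.diagonal ν =
          Matrix.diagonal (fun i => if i = i0 then (1 : ℂ) else 0) -
            ((lam⁻¹ : ℝ) : ℂ) • Matrix.diagonal (RCLike.ofReal ∘ μ) := by
        rw [← Matrix.diagonal_smul, ← Matrix.diagonal_sub]
        rfl
      rw [hd]
      simp only [Matrix.sub_mul, Matrix.mul_sub, Matrix.smul_mul, Matrix.mul_smul]
    have hνnonneg : ∀ i, 0 ≤ ν i := by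
      intro i
      by_cases hii : i = i0
      · subst hii
        simp only [hνdef, if_pos rfl]
        rw [← Complex.ofReal_mul, inv_mul_cancel₀ hlamne]
        norm_num
      · simp only [hνdef, if_neg hii]
        rw [zero_sub, ← Complex.ofReal_mul, ← Complex.ofReal_neg]
        rw [Complex.zero_le_real]
        have := honly i hii
        have hinv : 0 < lam⁻¹ := inv_pos.mpr hi0
        nlinarith
    have hρpsd : ρ.PosSemidef := by
      rw [hρconj, Matrix.star_eq_conjTranspose]
      exact (Matrix.posSemidef_diagonal_iff.mpr hνnonneg).mul_mul_conjTranspose_same U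
    have hρtr : ρ.trace = 1 := by
      rw [hρconj, trace_conj_diag' U hUmem]
      simp only [hνdef]
      rw [Finset.sum_sub_distrib, ← Finset.mul_sum]
      have e1 : (∑ i, (if i = i0 then (1 : ℂ) else 0)) = 1 := by simp
      have e2 : (∑ i, ((μ i : ℝ) : ℂ)) = 0 := by
        exact_mod_cast congrArg (Complex.ofReal) hsum
      rw [e1, e2, mul_zero, sub_zero]
    have hmeas : measMap Q (pureState (fun k => U k i0)) = measMap Q ρ := by
      rw [hρdef, measMap_sub', measMap_smul_real', hker]
      simp
    have heq := hdet (fun k => U k i0) hψunit ρ ⟨hρpsd, hρtr⟩ hmeas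
    apply hXne
    rw [hρdef] at heq
    have h0 : ((lam⁻¹ : ℝ) : ℂ) • X = 0 := by
      have := sub_eq_self.mp heq
      exact this
    have hc : ((lam⁻¹ : ℝ) : ℂ) ≠ 0 := by
      simp only [ne_eq, Complex.ofReal_eq_zero]
      exact inv_ne_zero hlamne
    exact (smul_eq_zero.mp h0).resolve_left hc
  · -- kernel condition → DeterminesPure
    intro hker ψ hψ ρ hρ hmeas
    by_contra hne
    set Y : Matrix (Fin d) (Fin d) ℂ := pureState ψ - ρ with hYdef
    have hYne : Y ≠ 0 := by
      rw [hYdef, sub_ne_zero]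
      exact fun h => hne h.symm
    have hYherm : Y.IsHermitian := (pureState_isHermitian' ψ).sub hρ.1.1
    have hYker : measMap Q Y = 0 := by
      rw [hYdef, measMap_sub', hmeas]
      simp
    have h2 := hker Y hYherm hYker hYne
    rw [posEigCount, Nat.card_eq_fintype_card] at h2
    obtain ⟨⟨i, hi⟩, ⟨j, hj⟩, hij⟩ := Fintype.one_lt_card_iff.mp h2
    have hij' : i ≠ j := fun h => hij (Subtype.ext h)
    set v1 : Fin d → ℂ := ⇑(hYherm.eigenvectorBasis i) with hv1def
    set v2 : Fin d → ℂ := ⇑(hYherm.eigenvectorBasis j) with hv2def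
    set a : ℂ := star ψ ⬝ᵥ v1 with hadef
    set b : ℂ := star ψ ⬝ᵥ v2 with hbdef
    obtain ⟨c1, c2, hc, hs⟩ : ∃ c1 c2 : ℂ, ¬(c1 = 0 ∧ c2 = 0) ∧ c1 * a + c2 * b = 0 := by
      by_cases ha : a = 0
      · exact ⟨1, 0, by simp, by simp [ha]⟩
      · refine ⟨b, -a, fun h => ha (by simpa using h.2), by ring⟩
    set w : Fin d → ℂ := c1 • v1 + c2 • v2 with hwdef
    have hq := quadform' hYherm hij' c1 c2
    have hposR : 0 < Complex.normSq c1 * hYherm.eigenvalues i +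
        Complex.normSq c2 * hYherm.eigenvalues j := by
      have t1 : 0 ≤ Complex.normSq c1 * hYherm.eigenvalues i :=
        mul_nonneg (Complex.normSq_nonneg _) hi.le
      have t2 : 0 ≤ Complex.normSq c2 * hYherm.eigenvalues j :=
        mul_nonneg (Complex.normSq_nonneg _) hj.le
      rcases not_and_or.mp hc with h | h
      · have : 0 < Complex.normSq c1 := by
          rcases (Complex.normSq_pos).mpr h with hh
          exact hh
        nlinarith
      · have : 0 < Complex.normSq c2 := (Complex.normSq_pos).mpr h
        nlinarith
    have hsw : star ψ ⬝ᵥ w = 0 := by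
      rw [hwdef, dotProduct_add, dotProduct_smul, dotProduct_smul]
      simpa [smul_eq_mul, ← hadef, ← hbdef] using hs
    have hqP : star w ⬝ᵥ (pureState ψ) *ᵥ w = 0 := by
      rw [pureState_mulVec', hsw]
      simp
    have hqρ : (0 : ℂ) ≤ star w ⬝ᵥ ρ *ᵥ w := hρ.1.dotProduct_mulVec_nonneg w
    have hcomb : star w ⬝ᵥ Y *ᵥ w = - (star w ⬝ᵥ ρ *ᵥ w) := by
      rw [hYdef, Matrix.sub_mulVec, dotProduct_sub, hqP]
      ring
    rw [hwdef, hv1def, hv2def] at hcomb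
    rw [hq] at hcomb
    have hle : ((Complex.normSq c1 * hYherm.eigenvalues i +
        Complex.normSq c2 * hYherm.eigenvalues j : ℝ) : ℂ) ≤ 0 := by
      rw [hcomb]
      exact neg_nonpos.mpr hqρ
    rw [show (0 : ℂ) = ((0 : ℝ) : ℂ) from rfl, Complex.real_le_real] at hle
    linarith
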